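/- Let M be a Gröbner-coherent graded R-module and M' ⊆ M a finitely generated homogeneous submodule. Then the quotient M/M' is Gröbner-coherent. -/

import Mathlib

open DirectSum

section Defs

variable {A : Type*} [CommRing A] (𝒜 : ℤ → AddSubgroup A) [GradedRing 𝒜]
variable {M : Type*} [AddCommGroup M] [Module A M] (ℳ : ℤ → AddSubgroup M)
  [DirectSum.Decomposition ℳ]

/-- The degree of an element of a graded object: the largest `n` whose homogeneous
component is nonzero (junk value for `x = 0`). -/
noncomputable def mdeg {σ M : Type*} [AddCommMonoid M] [SetLike σ M] [AddSubmonoidClass σ M]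
    (ℳ : ℤ → σ) [DirectSum.Decomposition ℳ] (x : M) : ℤ :=
  sSup {n : ℤ | (DirectSum.decompose ℳ x n : M) ≠ 0}

/-- The initial (top-degree) term of an element. -/
noncomputable def ini {σ M : Type*} [AddCommMonoid M] [SetLike σ M] [AddSubmonoidClass σ M]
    (ℳ : ℤ → σ) [DirectSum.Decomposition ℳ] (x : M) : M :=
  (DirectSum.decompose ℳ x (mdeg ℳ x) : M)

/-- The initial submodule of a submodule `N`: generated by initial terms of nonzero
elements of `N`. -/
def iniSub (N : Submodule A M) : Submodule A M :=
  Submodule.span A {m : M | ∃ x ∈ N, x ≠ 0 ∧ ini ℳ x = m}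

/-- The ring grading is supported in non-negative degrees. -/
def RingNonnegGraded : Prop := ∀ n < (0 : ℤ), ∀ a ∈ 𝒜 n, a = (0 : A)

/-- The module grading is bounded below. -/
def ModuleBddBelow : Prop := ∃ n₀ : ℤ, ∀ n < n₀, ∀ m ∈ ℳ n, m = (0 : M)

/-- A family of elements of `N` is a Gröbner basis for `N`. -/
def IsGrobnerBasis {I : Type*} (N : Submodule A M) (x : I → M) : Prop :=
  (∀ i, x i ∈ N) ∧
    Submodule.span A (Set.range fun i => ini ℳ (x i)) = iniSub ℳ N

/-- `a` gives a reduced expression `y = ∑ aᵢ xᵢ` with `deg aᵢ + deg xᵢ ≤ deg y`. -/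
def IsReducedExpr {I : Type*} (x : I → M) (y : M) (a : I →₀ A) : Prop :=
  y = a.sum (fun i c => c • x i) ∧
    ∀ i ∈ a.support, mdeg 𝒜 (a i) + mdeg ℳ (x i) ≤ mdeg ℳ y

/-- Set version of a Gröbner basis. -/
def IsGrobnerBasisSet (N : Submodule A M) (s : Set M) : Prop :=
  s ⊆ (N : Set M) ∧ Submodule.span A (ini ℳ '' s) = iniSub ℳ N

/-- `y` has a reduced expression in terms of the elements of `s`. -/
def HasReducedExprSet (s : Set M) (y : M) : Prop :=
  ∃ a : M →₀ A, ↑a.support ⊆ s ∧ y = a.sum (fun m c => c • m) ∧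
    ∀ m ∈ a.support, mdeg 𝒜 (a m) + mdeg ℳ m ≤ mdeg ℳ y

/-- A submodule is homogeneous when it contains all homogeneous components of its
elements. -/
def IsHomogSubmodule (N : Submodule A M) : Prop :=
  ∀ x ∈ N, ∀ n : ℤ, (DirectSum.decompose ℳ x n : M) ∈ N

/-- Graded-coherent: finitely generated, and every finitely generated homogeneous
submodule is finitely presented. -/
def GradedCoherent : Prop :=
  Module.Finite A M ∧ ∀ N : Submodule A M, N.FG → IsHomogSubmodule ℳ N →
    Module.FinitePresentation A N

/-- Gröbner-coherent: graded-coherent, and every finitely generated (possibly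
inhomogeneous) submodule admits a finite Gröbner basis. -/
def GrobnerCoherent : Prop :=
  GradedCoherent (A := A) ℳ ∧ ∀ N : Submodule A M, N.FG →
    ∃ s : Finset M, IsGrobnerBasisSet ℳ N ↑s

/-- A homogeneous generating family of syzygies of the initial terms of the `x i`
(with the free module graded by `deg eᵢ = deg xᵢ`). -/
def IsHomogSyzygyGens {I J : Type*} (x : I → M) (c : J → I →₀ A) : Prop :=
  (∀ j, ∃ d : ℤ, ∀ i, c j i ∈ 𝒜 (d - mdeg ℳ (x i))) ∧
    Submodule.span A (Set.range c) =
      LinearMap.ker (Finsupp.linearCombination A fun i => ini ℳ (x i))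

/-- Set version of a homogeneous generating set of syzygies of initial terms. -/
def IsHomogSyzygyGensSet (X : Set M) (C : Set (M →₀ A)) : Prop :=
  (∀ c ∈ C, ↑c.support ⊆ X) ∧
  (∀ c ∈ C, ∃ d : ℤ, ∀ m : M, c m ∈ 𝒜 (d - mdeg ℳ m)) ∧
  Submodule.span A C =
    Finsupp.supported A A X ⊓
      LinearMap.ker (Finsupp.linearCombination A fun m : M => ini ℳ m)

/-- The elements `z = ∑ c m • m` attached to a set of syzygies `C`. -/
def zElems (C : Set (M →₀ A)) : Set M :=
  (fun c : M →₀ A => c.sum fun m coeff => coeff • m) '' C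

/-- One step of Buchberger's algorithm: adjoin the `z`-elements of a homogeneous
generating set of syzygies. -/
def BuchbergerStep (X Y : Set M) : Prop :=
  ∃ C : Set (M →₀ A), IsHomogSyzygyGensSet 𝒜 ℳ X C ∧ Y = X ∪ zElems C

end Defs

section Helpers

variable {A M : Type*} [CommRing A] [AddCommGroup M] [Module A M]
  (ℳ : ℤ → AddSubgroup M) [DirectSum.Decomposition ℳ]

lemma decompose_eq_of_sum' (g : ℤ → M) (s : Finset ℤ)
    (hmem : ∀ n, g n ∈ ℳ n) (hzero : ∀ n ∉ s, g n = 0) (n : ℤ) :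
    (DirectSum.decompose ℳ (∑ m ∈ s, g m) n : M) = g n := by
  classical
  have h0 : DirectSum.decompose ℳ (∑ m ∈ s, g m)
      = ∑ m ∈ s, DirectSum.decompose ℳ (g m) := by
    exact DirectSum.decompose_sum ℳ s g
  have h1 : (DirectSum.decompose ℳ (∑ m ∈ s, g m) n : M)
      = ∑ m ∈ s, (DirectSum.decompose ℳ (g m) n : M) := by
    rw [h0, DFinsupp.finset_sum_apply, AddSubmonoidClass.coe_finset_sum]
  rw [h1, Finset.sum_eq_single n]
  · exact DirectSum.decompose_of_mem_same ℳ (hmem n)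
  · intro b _ hb
    exact DirectSum.decompose_of_mem_ne ℳ (hmem b) hb
  · intro hn
    rw [hzero n hn, DirectSum.decompose_zero]; rfl

lemma mdegSet_finite (x : M) :
    {n : ℤ | (DirectSum.decompose ℳ x n : M) ≠ 0}.Finite := by
  classical
  apply Set.Finite.subset (DirectSum.decompose ℳ x).support.finite_toSet
  intro n hn
  simp only [Set.mem_setOf_eq] at hn
  simp only [Finset.mem_coe, DFinsupp.mem_support_iff]
  intro h0
  exact hn (by rw [h0]; rfl)

lemma mdegSet_nonempty (x : M) (hx : x ≠ 0) :
    {n : ℤ | (DirectSum.decompose ℳ x n : M) ≠ 0}.Nonempty := by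
  classical
  by_contra hc
  push_neg at hc
  apply hx
  rw [← DirectSum.sum_support_decompose ℳ x]
  apply Finset.sum_eq_zero
  intro n _
  exact of_not_not (Set.eq_empty_iff_forall_notMem.mp hc n)

lemma mdeg_mem (x : M) (hx : x ≠ 0) :
    (DirectSum.decompose ℳ x (mdeg ℳ x) : M) ≠ 0 :=
  Set.Nonempty.csSup_mem (mdegSet_nonempty ℳ x hx) (mdegSet_finite ℳ x)

lemma ini_zero : ini ℳ (0 : M) = 0 := by
  simp [ini]

end Helpers

/-- The quotient of a Gröbner-coherent module by a finitely generated homogeneous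
submodule is Gröbner-coherent (with the induced grading). -/
theorem stmt_7 {A M : Type*} [CommRing A] (𝒜 : ℤ → AddSubgroup A) [GradedRing 𝒜]
    [AddCommGroup M] [Module A M] (ℳ : ℤ → AddSubgroup M) [DirectSum.Decomposition ℳ]
    [SetLike.GradedSMul 𝒜 ℳ]
    (hA : RingNonnegGraded 𝒜) (hM : ModuleBddBelow ℳ)
    (h : GrobnerCoherent (A := A) ℳ)
    (M' : Submodule A M) (hfg : M'.FG) (hhom : IsHomogSubmodule ℳ M')
    (ℳQ : ℤ → AddSubgroup (M ⧸ M')) [DirectSum.Decomposition ℳQ]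
    (hcompat : ∀ n : ℤ, ℳQ n = (ℳ n).map M'.mkQ.toAddMonoidHom) :
    GrobnerCoherent (A := A) ℳQ := by
  classical
  obtain ⟨⟨hMfin, hGC⟩, hGB⟩ := h
  -- decomposition in the quotient commutes with `mkQ`
  have hdec : ∀ (x : M) (n : ℤ),
      (DirectSum.decompose ℳQ (M'.mkQ x) n : M ⧸ M')
        = M'.mkQ (DirectSum.decompose ℳ x n) := by
    intro x n
    have hx : M'.mkQ x = ∑ m ∈ (DirectSum.decompose ℳ x).support,
        M'.mkQ (DirectSum.decompose ℳ x m : M) := by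
      rw [← map_sum, DirectSum.sum_support_decompose]
    rw [hx]
    refine decompose_eq_of_sum' ℳQ _ _ (fun m => ?_) (fun m hm => ?_) n
    · rw [hcompat]
      exact ⟨_, SetLike.coe_mem _, rfl⟩
    · have h0 : (DirectSum.decompose ℳ x m : M) = 0 := by
        have := DFinsupp.notMem_support_iff.mp hm
        rw [this]; rfl
      rw [h0, map_zero]
  -- compatibility of initial terms
  have hini : ∀ x : M, M'.mkQ (ini ℳ x) ≠ 0 →
      ini ℳQ (M'.mkQ x) = M'.mkQ (ini ℳ x) := by
    intro x hx0
    have hxne : x ≠ 0 := by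
      rintro rfl
      exact hx0 (by rw [ini_zero, map_zero])
    have hmemQ : mdeg ℳ x ∈
        {n : ℤ | (DirectSum.decompose ℳQ (M'.mkQ x) n : M ⧸ M') ≠ 0} := by
      rw [Set.mem_setOf_eq, hdec]
      exact hx0
    have hub : ∀ n ∈ {n : ℤ | (DirectSum.decompose ℳQ (M'.mkQ x) n : M ⧸ M') ≠ 0},
        n ≤ mdeg ℳ x := by
      intro n hn
      rw [Set.mem_setOf_eq, hdec] at hn
      have h1 : (DirectSum.decompose ℳ x n : M) ≠ 0 := by
        intro h; apply hn; rw [h, map_zero]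
      exact le_csSup (mdegSet_finite ℳ x).bddAbove h1
    have hd : mdeg ℳQ (M'.mkQ x) = mdeg ℳ x :=
      le_antisymm (csSup_le ⟨_, hmemQ⟩ hub)
        (le_csSup (mdegSet_finite ℳQ (M'.mkQ x)).bddAbove hmemQ)
    rw [ini, hd, hdec]
    rfl
  have hcomapFG : ∀ N : Submodule A (M ⧸ M'), N.FG → (N.comap M'.mkQ).FG := by
    intro N hN
    have hinf : N.comap M'.mkQ ⊓ M' = M' := by
      refine inf_eq_right.mpr fun x hx => ?_
      rw [Submodule.mem_comap, Submodule.mkQ_apply,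
        (Submodule.Quotient.mk_eq_zero _).mpr hx]
      exact N.zero_mem
    apply Submodule.fg_of_fg_map_of_fg_inf_ker M'.mkQ
    · rwa [Submodule.map_comap_eq, Submodule.range_mkQ, top_inf_eq]
    · rwa [Submodule.ker_mkQ, hinf]
  have hleM' : ∀ N : Submodule A (M ⧸ M'), M' ≤ N.comap M'.mkQ := by
    intro N x hx
    rw [Submodule.mem_comap, Submodule.mkQ_apply,
      (Submodule.Quotient.mk_eq_zero _).mpr hx]
    exact N.zero_mem
  constructor
  · constructor
    · exact Module.Finite.of_surjective (M := M) M'.mkQ (Submodule.mkQ_surjective M')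
    · intro N hNfg hNhom
      set N' : Submodule A M := N.comap M'.mkQ with hN'def
      have hN'fg : N'.FG := hcomapFG N hNfg
      have hN'hom : IsHomogSubmodule ℳ N' := by
        intro x hx n
        have h1 := hNhom (M'.mkQ x) hx n
        rw [hdec] at h1
        exact h1
      haveI hFP : Module.FinitePresentation A N' := hGC N' hN'fg hN'hom
      let f : N' →ₗ[A] N :=
        LinearMap.codRestrict N (M'.mkQ.comp N'.subtype) fun c => c.2
      have hsurj : Function.Surjective f := by
        rintro ⟨y, hy⟩
        obtain ⟨x, rfl⟩ := Submodule.mkQ_surjective M' y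
        exact ⟨⟨x, hy⟩, Subtype.ext rfl⟩
      have hker : (LinearMap.ker f).FG := by
        have hkereq : LinearMap.ker f = M'.comap N'.subtype := by
          ext c
          simp only [LinearMap.mem_ker, Submodule.mem_comap]
          constructor
          · intro hc
            have := congrArg (Subtype.val) hc
            change (Submodule.Quotient.mk (c : M) : M ⧸ M') = 0 at this
            simpa [f, Submodule.Quotient.mk_eq_zero] using this
          · intro hc
            apply Subtype.ext
            change (Submodule.Quotient.mk (c : M) : M ⧸ M') = 0
            simpa [f, Submodule.Quotient.mk_eq_zero] using hc
        rw [hkereq]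
        apply Submodule.fg_of_fg_map_of_fg_inf_ker N'.subtype
        · rwa [Submodule.map_comap_subtype, inf_eq_right.mpr (hleM' N)]
        · rw [Submodule.ker_subtype, inf_bot_eq]
          exact Submodule.fg_bot
      exact Module.finitePresentation_of_surjective f hsurj hker
  · intro N hNfg
    set N' : Submodule A M := N.comap M'.mkQ with hN'def
    obtain ⟨s', hs'mem, hs'span⟩ := hGB N' (hcomapFG N hNfg)
    refine ⟨s'.image M'.mkQ, ?_, ?_⟩
    · intro y hy
      simp only [Finset.coe_image, Set.mem_image, Finset.mem_coe] at hy
      obtain ⟨x, hx, rfl⟩ := hy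
      exact hs'mem hx
    · have himg : (↑(s'.image M'.mkQ) : Set (M ⧸ M')) = M'.mkQ '' ↑s' := by
        simp [Finset.coe_image]
      rw [himg]
      apply le_antisymm
      · rw [Submodule.span_le]
        rintro _ ⟨_, ⟨x, hx, rfl⟩, rfl⟩
        by_cases h0 : M'.mkQ x = 0
        · rw [h0, ini_zero]
          exact (iniSub ℳQ N).zero_mem
        · exact Submodule.subset_span ⟨M'.mkQ x, hs'mem hx, h0, rfl⟩
      · rw [iniSub, Submodule.span_le]
        rintro _ ⟨y, hyN, hy0, rfl⟩
        obtain ⟨z, rfl⟩ := Submodule.mkQ_surjective M' y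
        set d : ℤ := mdeg ℳQ (M'.mkQ z) with hd_def
        set g : ℤ → M := fun n => if n ≤ d then (DirectSum.decompose ℳ z n : M) else 0
          with hg_def
        set T : Finset ℤ := (DirectSum.decompose ℳ z).support.filter (· ≤ d) with hT_def
        have hgmem : ∀ n, g n ∈ ℳ n := by
          intro n
          by_cases hn : n ≤ d
          · simp only [hg_def, if_pos hn]; exact SetLike.coe_mem _
          · simp only [hg_def, if_neg hn]; exact zero_mem _
        have hgzero : ∀ n ∉ T, g n = 0 := by
          intro n hn
          by_cases hnd : n ≤ d
          · have : n ∉ (DirectSum.decompose ℳ z).support := by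
              intro hc; exact hn (Finset.mem_filter.mpr ⟨hc, hnd⟩)
            have h0 : (DirectSum.decompose ℳ z n : M) = 0 := by
              rw [DFinsupp.notMem_support_iff.mp this]; rfl
            simp only [hg_def, if_pos hnd, h0]
          · simp only [hg_def, if_neg hnd]
        set y' : M := ∑ n ∈ T, g n with hy'_def
        have hdecy' : ∀ n, (DirectSum.decompose ℳ y' n : M) = g n :=
          fun n => decompose_eq_of_sum' ℳ g T hgmem hgzero n
        -- components above d vanish in the quotient
        have hQ0 : ∀ n, d < n → M'.mkQ (DirectSum.decompose ℳ z n : M) = 0 := by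
          intro n hn
          by_contra hne
          have hmem : n ∈ {m : ℤ |
              (DirectSum.decompose ℳQ (M'.mkQ z) m : M ⧸ M') ≠ 0} := by
            rw [Set.mem_setOf_eq, hdec]; exact hne
          have h2 : n ≤ d := le_csSup (mdegSet_finite ℳQ (M'.mkQ z)).bddAbove hmem
          omega
        have ha : M'.mkQ y' = M'.mkQ z := by
          have h1 : M'.mkQ z = ∑ n ∈ (DirectSum.decompose ℳ z).support,
              M'.mkQ (DirectSum.decompose ℳ z n : M) := by
            rw [← map_sum, DirectSum.sum_support_decompose]
          rw [h1, ← Finset.sum_filter_add_sum_filter_not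
            ((DirectSum.decompose ℳ z).support) (· ≤ d)]
          have h2 : ∑ n ∈ (DirectSum.decompose ℳ z).support.filter (fun n => ¬ n ≤ d),
              M'.mkQ (DirectSum.decompose ℳ z n : M) = 0 := by
            apply Finset.sum_eq_zero
            intro n hn
            have hnd : ¬ n ≤ d := (Finset.mem_filter.mp hn).2
            exact hQ0 n (by omega)
          rw [h2, add_zero, hy'_def, map_sum]
          apply Finset.sum_congr rfl
          intro n hn
          have hnd : n ≤ d := by
            have := (Finset.mem_filter.mp (hT_def ▸ hn)).2
            simpa using this
          rw [hg_def]
          simp only [if_pos hnd]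
        have hy'N' : y' ∈ N' := by
          rw [hN'def, Submodule.mem_comap, ha]
          exact hyN
        -- the top component of y' maps to the initial term of mkQ z
        have htop : M'.mkQ (g d) = ini ℳQ (M'.mkQ z) := by
          rw [hg_def]
          simp only [le_refl, if_pos]
          rw [← hdec, ini]
        have hgd : g d ≠ 0 := by
          intro h0
          have h1 : ini ℳQ (M'.mkQ z) = 0 := by rw [← htop, h0, map_zero]
          exact mdeg_mem ℳQ (M'.mkQ z) hy0 h1
        have hy'ne : y' ≠ 0 := by
          intro h0
          apply hgd
          rw [← hdecy' d, h0, DirectSum.decompose_zero]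
          rfl
        have hmd : mdeg ℳ y' = d := by
          have hmemS : d ∈ {n : ℤ | (DirectSum.decompose ℳ y' n : M) ≠ 0} := by
            rw [Set.mem_setOf_eq, hdecy']; exact hgd
          have hubS : ∀ n ∈ {n : ℤ | (DirectSum.decompose ℳ y' n : M) ≠ 0}, n ≤ d := by
            intro n hn
            rw [Set.mem_setOf_eq, hdecy'] at hn
            by_contra hc
            exact hn (by rw [hg_def]; simp only [if_neg hc])
          exact le_antisymm (csSup_le ⟨d, hmemS⟩ hubS)
            (le_csSup (mdegSet_finite ℳ y').bddAbove hmemS)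
        have hiniy' : M'.mkQ (ini ℳ y') = ini ℳQ (M'.mkQ z) := by
          rw [ini, hmd, hdecy' d, htop]
        -- conclude
        have hin : ini ℳ y' ∈ Submodule.span A (ini ℳ '' ↑s') := by
          rw [hs'span]
          exact Submodule.subset_span ⟨y', hy'N', hy'ne, rfl⟩
        have hin2 : ini ℳQ (M'.mkQ z) ∈
            Submodule.span A (M'.mkQ '' (ini ℳ '' ↑s')) := by
          rw [← Submodule.map_span]
          exact ⟨ini ℳ y', hin, hiniy'⟩
        refine Submodule.span_le.mpr ?_ hin2
        rintro _ ⟨_, ⟨x, hx, rfl⟩, rfl⟩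
        by_cases h0 : M'.mkQ (ini ℳ x) = 0
        · rw [h0]
          exact Submodule.zero_mem _
        · rw [← hini x h0]
          exact Submodule.subset_span ⟨M'.mkQ x, ⟨x, hx, rfl⟩, rfl⟩
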